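/- Let p > 1 and let q satisfy 1/p + 1/q = 1, let σ ∈ ℝ, let δ ∈ {−1, 1}, and let H be a nonnegative Lebesgue-measurable function on ℝ with K(σ) := ∫_{−∞}^{∞} H(t) |t|^{σ-1} dt satisfying 0 < K(σ) < ∞. Suppose c > 0 is a constant such that for every pair of nonnegative measurable functions f, g on ℝ with 0 < ∫_{−∞}^{∞} |x|^{p(1−δσ)−1} f(x)^p dx < ∞ and 0 < ∫_{−∞}^{∞} |y|^{q(1−σ)−1} g(y)^q dy < ∞ one has ∫_{−∞}^{∞} ∫_{−∞}^{∞} H(x^δ · y) f(x) g(y) dx dy < c · (∫_{−∞}^{∞} |x|^{p(1−δσ)−1} f(x)^p dx)^{1/p} · (∫_{−∞}^{∞} |y|^{q(1−σ)−1} g(y)^q dy)^{1/q}. Then c ≥ K(σ); that is, the constant K(σ) in this whole-plane Hilbert-type inequality is best possible. -/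

import Mathlib

open MeasureTheory Set ENNReal Filter

private lemma my_ae_ne0 : ∀ᵐ x : ℝ, x ≠ 0 := by
  have : (volume : Measure ℝ) {(0:ℝ)} = 0 := measure_singleton 0
  filter_upwards [measure_eq_zero_iff_ae_notMem.mp this] with x hx
  simpa using hx

/-- integral of even ENNReal function over ℝ equals twice integral over Ioi 0 -/
private lemma my_lintegral_even (F : ℝ → ℝ≥0∞) (hF : Measurable F)
    (he : ∀ x : ℝ, F (-x) = F x) :
    ∫⁻ x, F x = 2 * ∫⁻ x in Ioi (0:ℝ), F x := by
  have hmap : Measure.map (fun x : ℝ => -x) volume = volume := Measure.map_neg_eq_self volume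
  have hneg : ∫⁻ x in Iio (0:ℝ), F x = ∫⁻ x in Ioi (0:ℝ), F x := by
    have : ∫⁻ x in Ioi (0:ℝ), F x = ∫⁻ x in Ioi (0:ℝ), F (-x) := by
      exact lintegral_congr fun x => (he x).symm
    rw [this]
    rw [← hmap]
    rw [setLIntegral_map measurableSet_Iio hF measurable_neg]
    congr 1
    ext x; simp [neg_lt_zero]
  have hsplit : ∫⁻ x, F x = (∫⁻ x in Iio (0:ℝ), F x) + ∫⁻ x in Ici (0:ℝ), F x := by
    rw [← lintegral_add_compl (f := F) (μ := volume) measurableSet_Iio]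
    congr 1
    · congr 1; ext x; simp [not_lt]
  have hIci : ∫⁻ x in Ici (0:ℝ), F x = ∫⁻ x in Ioi (0:ℝ), F x := by
    apply setLIntegral_congr
    have : (volume : Measure ℝ) {(0:ℝ)} = 0 := measure_singleton 0
    rw [show Ici (0:ℝ) = Ioi 0 ∪ {0} by ext x; simp [le_iff_lt_or_eq, or_comm]]
    exact union_ae_eq_left_of_ae_eq_empty (ae_eq_empty.mpr this)
  rw [hsplit, hneg, hIci, two_mul]

private lemma my_CIoi {η R : ℝ} (hη : 0 < η) (hR : 0 < R) :
    ∫⁻ x in Ioi R, ENNReal.ofReal (x ^ (-1 - η)) = ENNReal.ofReal (R ^ (-η) / η) := by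
  have ha : (-1 - η) < -1 := by linarith
  have hint : IntegrableOn (fun x : ℝ => x ^ (-1 - η)) (Ioi R) :=
    integrableOn_Ioi_rpow_of_lt ha hR
  rw [← ofReal_integral_eq_lintegral_ofReal hint ?pos]
  case pos =>
    filter_upwards [self_mem_ae_restrict (measurableSet_Ioi : MeasurableSet (Ioi R))] with x hx
    exact Real.rpow_nonneg (le_of_lt (lt_trans hR hx)) _
  rw [integral_Ioi_rpow_of_lt ha hR]
  congr 1
  have : (-1 - η) + 1 = -η := by ring
  rw [this]
  field_simp

private lemma my_CIoc {η R : ℝ} (hη : 0 < η) (hR : 0 < R) :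
    ∫⁻ x in Ioc (0:ℝ) R, ENNReal.ofReal (x ^ (-1 + η)) = ENNReal.ofReal (R ^ η / η) := by
  have ha : (-1:ℝ) < -1 + η := by linarith
  have hint : IntervalIntegrable (fun x : ℝ => x ^ (-1 + η)) volume 0 R :=
    intervalIntegral.intervalIntegrable_rpow' ha
  have hIoc : IntegrableOn (fun x : ℝ => x ^ (-1 + η)) (Ioc 0 R) := by
    rw [← intervalIntegrable_iff_integrableOn_Ioc_of_le hR.le]; exact hint
  rw [← ofReal_integral_eq_lintegral_ofReal hIoc ?pos]
  case pos =>
    filter_upwards [self_mem_ae_restrict (measurableSet_Ioc : MeasurableSet (Ioc (0:ℝ) R))] with x hx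
    exact Real.rpow_nonneg hx.1.le _
  have := integral_rpow (a := 0) (b := R) (r := -1 + η) (Or.inl ha)
  rw [intervalIntegral.integral_of_le hR.le] at this
  rw [this]
  congr 1
  rw [show (-1 + η) + 1 = η by ring, Real.zero_rpow hη.ne']
  field_simp
  simp

private lemma my_meas_absIci (R : ℝ) : MeasurableSet {x : ℝ | R ≤ |x|} :=
  measurableSet_le measurable_const measurable_id.norm

private lemma my_meas_absIcc (R : ℝ) : MeasurableSet {x : ℝ | |x| ≤ R} :=
  measurableSet_le measurable_id.norm measurable_const

private lemma my_C2' {η R : ℝ} (hη : 0 < η) (hR : 0 < R) :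
    ∫⁻ x : ℝ, ({x : ℝ | R ≤ |x|}.indicator (fun x => ENNReal.ofReal (|x| ^ (-1 - η)))) x
      = ENNReal.ofReal (2 * (R ^ (-η) / η)) := by
  have hm : Measurable ({x : ℝ | R ≤ |x|}.indicator (fun x => ENNReal.ofReal (|x| ^ (-1 - η)))) := by
    exact ((measurable_id.norm.pow_const _).ennreal_ofReal).indicator (my_meas_absIci R)
  rw [my_lintegral_even _ hm (fun x => by simp [Set.indicator_apply, abs_neg])]
  rw [lintegral_indicator (my_meas_absIci R) _, Measure.restrict_restrict (my_meas_absIci R)]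
  have hset : {x : ℝ | R ≤ |x|} ∩ Ioi 0 = Ioi R ∪ {R} := by
    ext x
    simp only [mem_inter_iff, mem_setOf_eq, mem_Ioi, mem_union, mem_singleton_iff]
    constructor
    · rintro ⟨h1, h2⟩
      rw [abs_of_pos h2] at h1
      rcases lt_or_eq_of_le h1 with h | h
      · exact Or.inl h
      · exact Or.inr h.symm
    · rintro (h | h)
      · exact ⟨le_of_lt (by rw [abs_of_pos (lt_trans hR h)]; exact h), lt_trans hR h⟩
      · subst h; exact ⟨by rw [abs_of_pos hR], hR⟩
  rw [hset]
  have hae : (volume : Measure ℝ).restrict (Ioi R ∪ {R}) = volume.restrict (Ioi R) := by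
    apply Measure.restrict_congr_set
    exact union_ae_eq_left_of_ae_eq_empty (ae_eq_empty.mpr (measure_singleton R))
  rw [hae]
  have hcongr : ∫⁻ x in Ioi R, ENNReal.ofReal (|x| ^ (-1 - η))
      = ∫⁻ x in Ioi R, ENNReal.ofReal (x ^ (-1 - η)) := by
    apply setLIntegral_congr_fun measurableSet_Ioi
    intro x hx
    show ENNReal.ofReal (|x| ^ (-1 - η)) = ENNReal.ofReal (x ^ (-1 - η))
    rw [abs_of_pos (lt_trans hR hx)]
  rw [hcongr, my_CIoi hη hR, ← ENNReal.ofReal_ofNat 2, ← ENNReal.ofReal_mul (by norm_num)]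

private lemma my_C1' {η R : ℝ} (hη : 0 < η) (hR : 0 < R) :
    ∫⁻ x : ℝ, ({x : ℝ | |x| ≤ R}.indicator (fun x => ENNReal.ofReal (|x| ^ (-1 + η)))) x
      = ENNReal.ofReal (2 * (R ^ η / η)) := by
  have hm : Measurable ({x : ℝ | |x| ≤ R}.indicator (fun x => ENNReal.ofReal (|x| ^ (-1 + η)))) := by
    exact ((measurable_id.norm.pow_const _).ennreal_ofReal).indicator (my_meas_absIcc R)
  rw [my_lintegral_even _ hm (fun x => by simp [Set.indicator_apply, abs_neg])]
  rw [lintegral_indicator (my_meas_absIcc R) _, Measure.restrict_restrict (my_meas_absIcc R)]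
  have hset : {x : ℝ | |x| ≤ R} ∩ Ioi 0 = Ioc 0 R := by
    ext x
    simp only [mem_inter_iff, mem_setOf_eq, mem_Ioi, mem_Ioc]
    constructor
    · rintro ⟨h1, h2⟩; exact ⟨h2, by rwa [abs_of_pos h2] at h1⟩
    · rintro ⟨h1, h2⟩; exact ⟨by rwa [abs_of_pos h1], h1⟩
  rw [hset]
  have hcongr : ∫⁻ x in Ioc (0:ℝ) R, ENNReal.ofReal (|x| ^ (-1 + η))
      = ∫⁻ x in Ioc (0:ℝ) R, ENNReal.ofReal (x ^ (-1 + η)) := by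
    apply setLIntegral_congr_fun measurableSet_Ioc
    intro x hx
    show ENNReal.ofReal (|x| ^ (-1 + η)) = ENNReal.ofReal (x ^ (-1 + η))
    rw [abs_of_pos hx.1]
  rw [hcongr, my_CIoc hη hR, ← ENNReal.ofReal_ofNat 2, ← ENNReal.ofReal_mul (by norm_num)]

private lemma my_Seval (δ : ℤ) (hδ : δ = -1 ∨ δ = 1) {ε r : ℝ} (hε : 0 < ε) (hr : 0 < r) :
    ∫⁻ x : ℝ, ({x : ℝ | r ≤ |x| ^ ((δ:ℝ))}.indicator
      (fun x => ENNReal.ofReal (|x| ^ (-1 - (δ:ℝ) * ε)))) x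
      = ENNReal.ofReal (2 * (r ^ (-ε) / ε)) := by
  rcases hδ with h | h <;> subst h
  · -- δ = -1
    simp only [Int.cast_neg, Int.cast_one]
    have hexp : -1 - (-1 : ℝ) * ε = -1 + ε := by ring
    rw [hexp]
    have hae : (fun x : ℝ => ({x : ℝ | r ≤ |x| ^ ((-1:ℝ))}.indicator
        (fun x => ENNReal.ofReal (|x| ^ (-1 + ε)))) x)
        =ᵐ[volume] fun x : ℝ => ({x : ℝ | |x| ≤ r⁻¹}.indicator
        (fun x => ENNReal.ofReal (|x| ^ (-1 + ε)))) x := by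
      filter_upwards [my_ae_ne0] with x hx
      have hx0 : 0 < |x| := abs_pos.mpr hx
      have hmem : (r ≤ |x| ^ ((-1:ℝ))) ↔ (|x| ≤ r⁻¹) := by
        rw [Real.rpow_neg_one]
        exact ⟨fun h => (le_inv_comm₀ hr hx0).mp h, fun h => (le_inv_comm₀ hr hx0).mpr h⟩
      simp only [Set.indicator_apply, mem_setOf_eq, hmem]
    rw [lintegral_congr_ae hae, my_C1' hε (inv_pos.mpr hr)]
    rw [← Real.rpow_neg_one r, ← Real.rpow_mul hr.le]
    norm_num
  · -- δ = 1
    simp only [Int.cast_one]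
    have h1 : ∀ x : ℝ, |x| ^ ((1:ℝ)) = |x| := fun x => Real.rpow_one _
    have hexp : -1 - (1 : ℝ) * ε = -1 - ε := by ring
    have hset : {x : ℝ | r ≤ |x| ^ ((1:ℝ))} = {x : ℝ | r ≤ |x|} := by
      ext x; simp [h1]
    rw [hexp, hset, my_C2' hε hr]

private lemma my_scale (a : ℝ) (ha : a ≠ 0) (Φ : ℝ → ℝ≥0∞) (hΦ : Measurable Φ) :
    ∫⁻ y : ℝ, Φ (a * y) = ENNReal.ofReal |a|⁻¹ * ∫⁻ t : ℝ, Φ t := by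
  have h1 : ∫⁻ y : ℝ, Φ (a * y) = ∫⁻ t : ℝ, Φ t ∂(Measure.map (a * ·) volume) :=
    (lintegral_map hΦ (measurable_const_mul a)).symm
  rw [h1, Real.map_volume_mul_left ha, lintegral_smul_measure, abs_inv, smul_eq_mul]

private lemma my_meas_kernel (δ : ℤ) (hδ : δ = -1 ∨ δ = 1) :
    Measurable (fun z : ℝ × ℝ => (z.1 ^ δ) * z.2) := by
  rcases hδ with h | h <;> subst h
  · simp only [zpow_neg, zpow_one]; exact measurable_fst.inv.mul measurable_snd
  · simp only [zpow_one]; exact measurable_fst.mul measurable_snd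

private lemma my_abs_zpow (δ : ℤ) (hδ : δ = -1 ∨ δ = 1) (x : ℝ) (hx : x ≠ 0) :
    |x ^ δ| = |x| ^ ((δ:ℝ)) := by
  rcases hδ with h | h <;> subst h
  · rw [zpow_neg, zpow_one, abs_inv]
    push_cast
    rw [Real.rpow_neg_one]
  · simp

private lemma my_zpow_ne_zero (δ : ℤ) (x : ℝ) (hx : x ≠ 0) : x ^ δ ≠ 0 :=
  zpow_ne_zero δ hx

private lemma my_Jf (p σ ε : ℝ) (hp : 0 < p) (δ : ℤ) (hδ : δ = -1 ∨ δ = 1) (hε : 0 < ε) :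
    ∫⁻ x : ℝ, ENNReal.ofReal (|x| ^ (p * (1 - (δ:ℝ) * σ) - 1) *
      (if 1 ≤ |x| ^ ((δ:ℝ)) then |x| ^ ((δ:ℝ) * σ - 1 - (δ:ℝ) * (ε / p)) else 0) ^ p)
      = ENNReal.ofReal (2 / ε) := by
  have hcong : (fun x : ℝ => ENNReal.ofReal (|x| ^ (p * (1 - (δ:ℝ) * σ) - 1) *
      (if 1 ≤ |x| ^ ((δ:ℝ)) then |x| ^ ((δ:ℝ) * σ - 1 - (δ:ℝ) * (ε / p)) else 0) ^ p))
      =ᵐ[volume] (fun x : ℝ => ({x : ℝ | 1 ≤ |x| ^ ((δ:ℝ))}.indicator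
        (fun x => ENNReal.ofReal (|x| ^ (-1 - (δ:ℝ) * ε)))) x) := by
    filter_upwards [my_ae_ne0] with x hx
    by_cases hxA : 1 ≤ |x| ^ ((δ:ℝ))
    · rw [if_pos hxA, Set.indicator_of_mem (by exact hxA)]
      rw [← Real.rpow_mul (abs_nonneg x), ← Real.rpow_add (abs_pos.mpr hx)]
      congr 2
      field_simp
      ring
    · rw [if_neg hxA, Set.indicator_of_notMem (by exact hxA)]
      rw [Real.zero_rpow hp.ne', mul_zero, ENNReal.ofReal_zero]
  rw [lintegral_congr_ae hcong, my_Seval δ hδ hε one_pos]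
  norm_num
  rw [div_eq_mul_inv]
  rw [ENNReal.ofReal_mul (by norm_num), ENNReal.ofReal_ofNat]

private lemma my_Jg (q σ ε : ℝ) (hq : 0 < q) (hε : 0 < ε) :
    ∫⁻ y : ℝ, ENNReal.ofReal (|y| ^ (q * (1 - σ) - 1) *
      (if |y| ≤ 1 then |y| ^ (σ - 1 + ε / q) else 0) ^ q)
      = ENNReal.ofReal (2 / ε) := by
  have hcong : (fun y : ℝ => ENNReal.ofReal (|y| ^ (q * (1 - σ) - 1) *
      (if |y| ≤ 1 then |y| ^ (σ - 1 + ε / q) else 0) ^ q))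
      =ᵐ[volume] (fun y : ℝ => ({y : ℝ | |y| ≤ 1}.indicator
        (fun y => ENNReal.ofReal (|y| ^ (-1 + ε)))) y) := by
    filter_upwards [my_ae_ne0] with y hy
    by_cases hyA : |y| ≤ 1
    · rw [if_pos hyA, Set.indicator_of_mem (by exact hyA)]
      rw [← Real.rpow_mul (abs_nonneg y), ← Real.rpow_add (abs_pos.mpr hy)]
      congr 2
      field_simp
      ring
    · rw [if_neg hyA, Set.indicator_of_notMem (by exact hyA)]
      rw [Real.zero_rpow hq.ne', mul_zero, ENNReal.ofReal_zero]
  rw [lintegral_congr_ae hcong, my_C1' hε one_pos]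
  norm_num
  rw [div_eq_mul_inv]
  rw [ENNReal.ofReal_mul (by norm_num), ENNReal.ofReal_ofNat]

private lemma my_g_meas (b : ℝ) : Measurable (fun y : ℝ => if |y| ≤ 1 then |y| ^ b else 0) :=
  Measurable.ite (my_meas_absIcc 1) (measurable_id.norm.pow_const b) measurable_const

private lemma my_inner (δ : ℤ) (hδ : δ = -1 ∨ δ = 1) (H : ℝ → ℝ) (hH : Measurable H)
    (hH0 : ∀ t, 0 ≤ H t) (b : ℝ) (x : ℝ) (hx : x ≠ 0) :
    ∫⁻ y : ℝ, ENNReal.ofReal (H (x ^ δ * y) * (if |y| ≤ 1 then |y| ^ b else 0))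
      = ENNReal.ofReal ((|x| ^ ((δ:ℝ)))⁻¹ * (|x| ^ ((δ:ℝ))) ^ (-b)) *
        ∫⁻ t : ℝ, ({t : ℝ | |t| ≤ |x| ^ ((δ:ℝ))}.indicator
          (fun t => ENNReal.ofReal (H t * |t| ^ b))) t := by
  set a : ℝ := x ^ δ with ha_def
  have ha : a ≠ 0 := zpow_ne_zero δ hx
  have habs : |a| = |x| ^ ((δ:ℝ)) := my_abs_zpow δ hδ x hx
  have hapos : 0 < |a| := abs_pos.mpr ha
  set g : ℝ → ℝ := fun y => if |y| ≤ 1 then |y| ^ b else 0 with hg_def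
  set Φ : ℝ → ℝ≥0∞ := fun t => ENNReal.ofReal (H t * g (a⁻¹ * t)) with hΦ_def
  have hΦm : Measurable Φ :=
    (hH.mul ((my_g_meas b).comp (measurable_const_mul a⁻¹))).ennreal_ofReal
  have hstep1 : ∀ y : ℝ, ENNReal.ofReal (H (a * y) * g y) = Φ (a * y) := by
    intro y
    simp only [hΦ_def, inv_mul_cancel_left₀ ha]
  have hΦval : ∀ t : ℝ, Φ t = ENNReal.ofReal (|a| ^ (-b)) *
      ({t : ℝ | |t| ≤ |a|}.indicator (fun t => ENNReal.ofReal (H t * |t| ^ b))) t := by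
    intro t
    by_cases hmem : |t| ≤ |a|
    · have hcond : |a⁻¹ * t| ≤ 1 := by
        rw [abs_mul, abs_inv, inv_mul_eq_div, div_le_one hapos]; exact hmem
      have hval : |a⁻¹ * t| ^ b = |a| ^ (-b) * |t| ^ b := by
        rw [abs_mul, abs_inv, inv_mul_eq_div, Real.div_rpow (abs_nonneg t) (abs_nonneg a),
          Real.rpow_neg (abs_nonneg a), div_eq_mul_inv, mul_comm]
      have hmem' : t ∈ {t : ℝ | |t| ≤ |a|} := hmem
      rw [hΦ_def]
      simp only [hg_def, if_pos hcond, hval]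
      rw [Set.indicator_of_mem hmem',
        show H t * (|a| ^ (-b) * |t| ^ b) = |a| ^ (-b) * (H t * |t| ^ b) by ring,
        ENNReal.ofReal_mul (Real.rpow_nonneg (abs_nonneg a) _)]
    · have hcond : ¬ (|a⁻¹ * t| ≤ 1) := by
        rw [abs_mul, abs_inv, inv_mul_eq_div, div_le_one hapos]; exact hmem
      have hmem' : t ∉ {t : ℝ | |t| ≤ |a|} := hmem
      rw [hΦ_def]
      simp only [hg_def, if_neg hcond, mul_zero, ENNReal.ofReal_zero]
      rw [Set.indicator_of_notMem hmem', mul_zero]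
  calc ∫⁻ y : ℝ, ENNReal.ofReal (H (a * y) * g y)
      = ∫⁻ y : ℝ, Φ (a * y) := by simp only [hstep1]
    _ = ENNReal.ofReal |a|⁻¹ * ∫⁻ t : ℝ, Φ t := my_scale a ha Φ hΦm
    _ = ENNReal.ofReal |a|⁻¹ * (ENNReal.ofReal (|a| ^ (-b)) *
        ∫⁻ t : ℝ, ({t : ℝ | |t| ≤ |a|}.indicator
          (fun t => ENNReal.ofReal (H t * |t| ^ b))) t) := by
        rw [show (∫⁻ t : ℝ, Φ t) = ∫⁻ t : ℝ, ENNReal.ofReal (|a| ^ (-b)) *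
            ({t : ℝ | |t| ≤ |a|}.indicator (fun t => ENNReal.ofReal (H t * |t| ^ b))) t from
          lintegral_congr hΦval]
        have hmeas_ind : Measurable ({t : ℝ | |t| ≤ |a|}.indicator
            (fun t => ENNReal.ofReal (H t * |t| ^ b))) := by
          exact ((hH.mul (measurable_id.norm.pow_const b)).ennreal_ofReal).indicator
            (my_meas_absIcc _)
        rw [lintegral_const_mul _ hmeas_ind]
    _ = ENNReal.ofReal (|a|⁻¹ * |a| ^ (-b)) *
        ∫⁻ t : ℝ, ({t : ℝ | |t| ≤ |a|}.indicator
          (fun t => ENNReal.ofReal (H t * |t| ^ b))) t := by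
        rw [← mul_assoc, ← ENNReal.ofReal_mul (inv_nonneg.mpr (abs_nonneg a))]
    _ = _ := by rw [habs]

private lemma my_claim (p q σ : ℝ) (hp : 1 < p) (hpq : 1 / p + 1 / q = 1)
    (δ : ℤ) (hδ : δ = -1 ∨ δ = 1)
    (H : ℝ → ℝ) (hH : Measurable H) (hH0 : ∀ t : ℝ, 0 ≤ H t)
    (c : ℝ)
    (hbd : ∀ f g : ℝ → ℝ, Measurable f → Measurable g →
      (∀ x : ℝ, 0 ≤ f x) → (∀ y : ℝ, 0 ≤ g y) →
      0 < (∫⁻ x : ℝ, ENNReal.ofReal (|x| ^ (p * (1 - (δ : ℝ) * σ) - 1) * f x ^ p)) →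
      (∫⁻ x : ℝ, ENNReal.ofReal (|x| ^ (p * (1 - (δ : ℝ) * σ) - 1) * f x ^ p)) < ⊤ →
      0 < (∫⁻ y : ℝ, ENNReal.ofReal (|y| ^ (q * (1 - σ) - 1) * g y ^ q)) →
      (∫⁻ y : ℝ, ENNReal.ofReal (|y| ^ (q * (1 - σ) - 1) * g y ^ q)) < ⊤ →
      (∫⁻ y : ℝ, ∫⁻ x : ℝ, ENNReal.ofReal (H (x ^ δ * y) * f x * g y))
        < ENNReal.ofReal c *
            (∫⁻ x : ℝ, ENNReal.ofReal (|x| ^ (p * (1 - (δ : ℝ) * σ) - 1) * f x ^ p)) ^ (1 / p) *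
            (∫⁻ y : ℝ, ENNReal.ofReal (|y| ^ (q * (1 - σ) - 1) * g y ^ q)) ^ (1 / q))
    {ε : ℝ} (hε : 0 < ε) :
    ∫⁻ t : ℝ, ENNReal.ofReal (H t *
      (if |t| ≤ 1 then |t| ^ (σ - 1 + ε / q) else |t| ^ (σ - 1 - ε / p)))
      ≤ ENNReal.ofReal c := by
  have hp0 : 0 < p := lt_trans one_pos hp
  have hq0 : 0 < q := by
    have h1 : 1 / p < 1 := by rw [div_lt_one hp0]; exact hp
    have h2 : 0 < 1 / q := by linarith
    exact one_div_pos.mp h2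
  have hεpq : ε / p + ε / q = ε := by
    have h : ε / p + ε / q = ε * (1 / p + 1 / q) := by ring
    rw [h, hpq, mul_one]
  -- test functions
  set f : ℝ → ℝ := fun x => if 1 ≤ |x| ^ ((δ:ℝ)) then |x| ^ ((δ:ℝ) * σ - 1 - (δ:ℝ) * (ε / p)) else 0 with hf_def
  set g : ℝ → ℝ := fun y => if |y| ≤ 1 then |y| ^ (σ - 1 + ε / q) else 0 with hg_def
  have hfm : Measurable f :=
    Measurable.ite (measurableSet_le measurable_const (measurable_id.norm.pow_const _))
      (measurable_id.norm.pow_const _) measurable_const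
  have hgm : Measurable g := my_g_meas _
  have hf0 : ∀ x : ℝ, 0 ≤ f x := by
    intro x; rw [hf_def]; dsimp only; split_ifs
    · exact Real.rpow_nonneg (abs_nonneg x) _
    · exact le_refl 0
  have hg0 : ∀ y : ℝ, 0 ≤ g y := by
    intro y; rw [hg_def]; dsimp only; split_ifs
    · exact Real.rpow_nonneg (abs_nonneg y) _
    · exact le_refl 0
  have hJf : (∫⁻ x : ℝ, ENNReal.ofReal (|x| ^ (p * (1 - (δ : ℝ) * σ) - 1) * f x ^ p))
      = ENNReal.ofReal (2 / ε) := my_Jf p σ ε hp0 δ hδ hε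
  have hJg : (∫⁻ y : ℝ, ENNReal.ofReal (|y| ^ (q * (1 - σ) - 1) * g y ^ q))
      = ENNReal.ofReal (2 / ε) := my_Jg q σ ε hq0 hε
  have h2ε0 : (0:ℝ) < 2 / ε := by positivity
  have hX0 : ENNReal.ofReal (2 / ε) ≠ 0 := (ENNReal.ofReal_pos.mpr h2ε0).ne'
  have hXt : ENNReal.ofReal (2 / ε) ≠ ⊤ := ENNReal.ofReal_ne_top
  have hmain := hbd f g hfm hgm hf0 hg0
    (by rw [hJf]; exact ENNReal.ofReal_pos.mpr h2ε0)
    (by rw [hJf]; exact ENNReal.ofReal_lt_top)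
    (by rw [hJg]; exact ENNReal.ofReal_pos.mpr h2ε0)
    (by rw [hJg]; exact ENNReal.ofReal_lt_top)
  rw [hJf, hJg] at hmain
  have hRHS : ENNReal.ofReal c * ENNReal.ofReal (2 / ε) ^ (1 / p) *
      ENNReal.ofReal (2 / ε) ^ (1 / q) = ENNReal.ofReal c * ENNReal.ofReal (2 / ε) := by
    rw [mul_assoc, ← ENNReal.rpow_add _ _ hX0 hXt, hpq, ENNReal.rpow_one]
  rw [hRHS] at hmain
  -- abbreviations
  set hfun : ℝ → ℝ≥0∞ := fun t => ENNReal.ofReal (H t * |t| ^ (σ - 1 + ε / q)) with hfun_def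
  have hfunm : Measurable hfun := (hH.mul (measurable_id.norm.pow_const _)).ennreal_ofReal
  set G : ℝ → ℝ≥0∞ := fun x => ENNReal.ofReal (|x| ^ (-1 - (δ:ℝ) * ε)) with hG_def
  have hGm : Measurable G := (measurable_id.norm.pow_const _).ennreal_ofReal
  set A : Set ℝ := {x : ℝ | 1 ≤ |x| ^ ((δ:ℝ))} with hA_def
  have hAm : MeasurableSet A :=
    measurableSet_le measurable_const (measurable_id.norm.pow_const _)
  have hAGm : Measurable (A.indicator G) := hGm.indicator hAm
  set W : ℝ → ℝ≥0∞ := fun x =>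
    ∫⁻ t : ℝ, ({t : ℝ | |t| ≤ |x| ^ ((δ:ℝ))}.indicator hfun) t with hW_def
  set V : ℝ → ℝ≥0∞ := fun x =>
    ∫⁻ t : ℝ, (if 1 < |t| ∧ |t| ≤ |x| ^ ((δ:ℝ)) then hfun t else 0) with hV_def
  set W1 : ℝ≥0∞ := ∫⁻ t : ℝ, (if |t| ≤ 1 then hfun t else 0) with hW1_def
  have hSA : ∫⁻ x : ℝ, A.indicator G x = ENNReal.ofReal (2 / ε) := by
    rw [hA_def, hG_def]
    rw [my_Seval δ hδ hε one_pos]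
    norm_num
    rw [div_eq_mul_inv]
    rw [ENNReal.ofReal_mul (by norm_num), ENNReal.ofReal_ofNat]
  -- Step A : representation of the double integral
  have hum : Measurable (Function.uncurry fun x y : ℝ =>
      ENNReal.ofReal (H (x ^ δ * y) * f x * g y)) := by
    apply Measurable.ennreal_ofReal
    exact ((hH.comp (my_meas_kernel δ hδ)).mul (hfm.comp measurable_fst)).mul
      (hgm.comp measurable_snd)
  have hswap1 : (∫⁻ y : ℝ, ∫⁻ x : ℝ, ENNReal.ofReal (H (x ^ δ * y) * f x * g y))
      = ∫⁻ x : ℝ, ∫⁻ y : ℝ, ENNReal.ofReal (H (x ^ δ * y) * f x * g y) :=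
    (lintegral_lintegral_swap hum.aemeasurable).symm
  have hinner : ∀ x : ℝ, x ≠ 0 →
      (∫⁻ y : ℝ, ENNReal.ofReal (H (x ^ δ * y) * g y))
        = ENNReal.ofReal ((|x| ^ ((δ:ℝ)))⁻¹ * (|x| ^ ((δ:ℝ))) ^ (-(σ - 1 + ε / q))) *
          W x := by
    intro x hx
    rw [hg_def, hW_def, hfun_def]
    exact my_inner δ hδ H hH hH0 (σ - 1 + ε / q) x hx
  have hrep : (∫⁻ y : ℝ, ∫⁻ x : ℝ, ENNReal.ofReal (H (x ^ δ * y) * f x * g y))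
      = ∫⁻ x : ℝ, A.indicator G x * W x := by
    rw [hswap1]
    apply lintegral_congr_ae
    filter_upwards [my_ae_ne0] with x hx
    have hpull : (∫⁻ y : ℝ, ENNReal.ofReal (H (x ^ δ * y) * f x * g y))
        = ENNReal.ofReal (f x) * ∫⁻ y : ℝ, ENNReal.ofReal (H (x ^ δ * y) * g y) := by
      have hme : Measurable fun y : ℝ => ENNReal.ofReal (H (x ^ δ * y) * g y) := by
        apply Measurable.ennreal_ofReal
        exact (hH.comp (measurable_const_mul (x ^ δ))).mul hgm
      rw [← lintegral_const_mul _ hme]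
      apply lintegral_congr
      intro y
      rw [← ENNReal.ofReal_mul (hf0 x)]
      congr 1
      ring
    rw [hpull, hinner x hx, ← mul_assoc]
    congr 1
    by_cases hxA : x ∈ A
    · have hxA' : 1 ≤ |x| ^ ((δ:ℝ)) := hxA
      rw [Set.indicator_of_mem hxA, hf_def, hG_def]
      dsimp only
      rw [if_pos hxA']
      rw [← ENNReal.ofReal_mul (Real.rpow_nonneg (abs_nonneg x) _)]
      congr 1
      rw [← Real.rpow_neg (abs_nonneg x), ← Real.rpow_mul (abs_nonneg x),
        ← Real.rpow_add (abs_pos.mpr hx), ← Real.rpow_add (abs_pos.mpr hx)]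
      congr 1
      linear_combination (-(δ:ℝ)) * hεpq
    · have hxA' : ¬ (1 ≤ |x| ^ ((δ:ℝ))) := hxA
      rw [Set.indicator_of_notMem hxA, hf_def]
      dsimp only
      rw [if_neg hxA']
      simp
  -- Step B : pointwise lower bound for W
  have hWlow : ∀ x : ℝ, A.indicator G x * (W1 + V x) ≤ A.indicator G x * W x := by
    intro x
    by_cases hxA : x ∈ A
    · have hxA' : 1 ≤ |x| ^ ((δ:ℝ)) := hxA
      apply mul_le_mul_right
      have hadd : W1 + V x = ∫⁻ t : ℝ,
          ((if |t| ≤ 1 then hfun t else 0) + (if 1 < |t| ∧ |t| ≤ |x| ^ ((δ:ℝ)) then hfun t else 0)) := by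
        rw [hW1_def, hV_def]
        rw [lintegral_add_left (Measurable.ite (my_meas_absIcc 1) hfunm measurable_const)]
      rw [hadd, hW_def]
      apply lintegral_mono
      intro t
      dsimp only
      by_cases ht1 : |t| ≤ 1
      · have hmem : t ∈ {t : ℝ | |t| ≤ |x| ^ ((δ:ℝ))} := le_trans ht1 hxA'
        rw [if_pos ht1, if_neg (by rintro ⟨h1, _⟩; exact absurd ht1 (not_le.mpr h1)),
          Set.indicator_of_mem hmem, add_zero]
      · by_cases ht2 : |t| ≤ |x| ^ ((δ:ℝ))
        · have hmem : t ∈ {t : ℝ | |t| ≤ |x| ^ ((δ:ℝ))} := ht2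
          rw [if_neg ht1, if_pos ⟨not_le.mp ht1, ht2⟩, Set.indicator_of_mem hmem, zero_add]
        · rw [if_neg ht1, if_neg (by rintro ⟨_, h2⟩; exact ht2 h2), add_zero]
          exact bot_le
    · rw [Set.indicator_of_notMem hxA, zero_mul, zero_mul]
  -- Step C : the T term
  have hVmeas : ∀ x : ℝ, Measurable fun t : ℝ =>
      (if 1 < |t| ∧ |t| ≤ |x| ^ ((δ:ℝ)) then hfun t else 0) := by
    intro x
    apply Measurable.ite _ hfunm measurable_const
    rw [Set.setOf_and]
    exact (measurableSet_lt measurable_const measurable_id.norm).inter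
      (measurableSet_le measurable_id.norm measurable_const)
  have hT : (∫⁻ x : ℝ, A.indicator G x * V x)
      = ∫⁻ t : ℝ, (if 1 < |t| then ENNReal.ofReal (2 * (|t| ^ (-ε) / ε)) * hfun t else 0) := by
    have h1 : ∀ x : ℝ, A.indicator G x * V x = ∫⁻ t : ℝ,
        A.indicator G x * (if 1 < |t| ∧ |t| ≤ |x| ^ ((δ:ℝ)) then hfun t else 0) := by
      intro x
      rw [hV_def]
      rw [lintegral_const_mul _ (hVmeas x)]
    rw [lintegral_congr h1]
    have humΨ : Measurable (Function.uncurry fun x t : ℝ =>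
        A.indicator G x * (if 1 < |t| ∧ |t| ≤ |x| ^ ((δ:ℝ)) then hfun t else 0)) := by
      apply Measurable.mul
      · exact hAGm.comp measurable_fst
      · apply Measurable.ite _ (hfunm.comp measurable_snd) measurable_const
        have hseteq : {z : ℝ × ℝ | 1 < |z.2| ∧ |z.2| ≤ |z.1| ^ ((δ:ℝ))}
            = {z : ℝ × ℝ | 1 < |z.2|} ∩ {z : ℝ × ℝ | |z.2| ≤ |z.1| ^ ((δ:ℝ))} := rfl
        show MeasurableSet {z : ℝ × ℝ | 1 < |z.2| ∧ |z.2| ≤ |z.1| ^ ((δ:ℝ))}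
        rw [hseteq]
        exact (measurableSet_lt measurable_const measurable_snd.norm).inter
          (measurableSet_le measurable_snd.norm (measurable_fst.norm.pow_const _))
    rw [lintegral_lintegral_swap humΨ.aemeasurable]
    apply lintegral_congr
    intro t
    by_cases ht : 1 < |t|
    · rw [if_pos ht]
      have hpt : ∀ x : ℝ, A.indicator G x * (if 1 < |t| ∧ |t| ≤ |x| ^ ((δ:ℝ)) then hfun t else 0)
          = ({x : ℝ | |t| ≤ |x| ^ ((δ:ℝ))}.indicator G) x * hfun t := by
        intro x
        by_cases hcond : |t| ≤ |x| ^ ((δ:ℝ))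
        · have hxA : x ∈ A := le_trans ht.le hcond
          have hmem : x ∈ {x : ℝ | |t| ≤ |x| ^ ((δ:ℝ))} := hcond
          rw [if_pos ⟨ht, hcond⟩, Set.indicator_of_mem hxA, Set.indicator_of_mem hmem]
        · have hmem : x ∉ {x : ℝ | |t| ≤ |x| ^ ((δ:ℝ))} := hcond
          rw [if_neg (by rintro ⟨_, h2⟩; exact hcond h2), Set.indicator_of_notMem hmem,
            mul_zero, zero_mul]
      rw [lintegral_congr hpt]
      have hmeasind : Measurable ({x : ℝ | |t| ≤ |x| ^ ((δ:ℝ))}.indicator G) := by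
        exact hGm.indicator (measurableSet_le measurable_const (measurable_id.norm.pow_const _))
      rw [lintegral_mul_const _ hmeasind]
      congr 1
      rw [hG_def]
      exact my_Seval δ hδ hε (lt_trans one_pos ht)
    · rw [if_neg ht]
      have : ∀ x : ℝ, A.indicator G x * (if 1 < |t| ∧ |t| ≤ |x| ^ ((δ:ℝ)) then hfun t else 0) = 0 := by
        intro x
        rw [if_neg (by rintro ⟨h1, _⟩; exact ht h1), mul_zero]
      rw [lintegral_congr this, lintegral_zero]
  -- Step D : identify the LHS
  have hψ : ∀ t : ℝ, ENNReal.ofReal (2 / ε) * ENNReal.ofReal (H t *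
      (if |t| ≤ 1 then |t| ^ (σ - 1 + ε / q) else |t| ^ (σ - 1 - ε / p)))
      = (if |t| ≤ 1 then ENNReal.ofReal (2 / ε) * hfun t else 0)
        + (if 1 < |t| then ENNReal.ofReal (2 * (|t| ^ (-ε) / ε)) * hfun t else 0) := by
    intro t
    by_cases ht1 : |t| ≤ 1
    · rw [if_pos ht1, if_pos ht1, if_neg (not_lt.mpr ht1), add_zero, hfun_def]
    · have ht : 1 < |t| := not_le.mp ht1
      have ht0 : (0:ℝ) < |t| := lt_trans one_pos ht
      rw [if_neg ht1, if_neg ht1, if_pos ht, zero_add, hfun_def]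
      dsimp only
      rw [← ENNReal.ofReal_mul (by positivity), ← ENNReal.ofReal_mul (by positivity)]
      congr 1
      have hts : |t| ^ (σ - 1 - ε / p) = |t| ^ (-ε) * |t| ^ (σ - 1 + ε / q) := by
        rw [← Real.rpow_add ht0]
        congr 1
        linarith [hεpq]
      rw [hts]
      ring
  have hLHS : ENNReal.ofReal (2 / ε) * (∫⁻ t : ℝ, ENNReal.ofReal (H t *
      (if |t| ≤ 1 then |t| ^ (σ - 1 + ε / q) else |t| ^ (σ - 1 - ε / p))))
      = ∫⁻ x : ℝ, A.indicator G x * (W1 + V x) := by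
    rw [← lintegral_const_mul _ (by
      apply Measurable.ennreal_ofReal
      exact hH.mul (Measurable.ite (my_meas_absIcc 1) (measurable_id.norm.pow_const _)
        (measurable_id.norm.pow_const _)))]
    rw [lintegral_congr hψ]
    rw [lintegral_add_left (by
      exact Measurable.ite (my_meas_absIcc 1) (measurable_const.mul hfunm) measurable_const)]
    have hfirst : (∫⁻ t : ℝ, (if |t| ≤ 1 then ENNReal.ofReal (2 / ε) * hfun t else 0))
        = ENNReal.ofReal (2 / ε) * W1 := by
      rw [hW1_def, ← lintegral_const_mul _ (Measurable.ite (my_meas_absIcc 1) hfunm measurable_const)]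
      apply lintegral_congr
      intro t
      by_cases ht1 : |t| ≤ 1
      · rw [if_pos ht1, if_pos ht1]
      · rw [if_neg ht1, if_neg ht1, mul_zero]
    have hsecond : ∀ x : ℝ, A.indicator G x * (W1 + V x)
        = A.indicator G x * W1 + A.indicator G x * V x := fun x => mul_add _ _ _
    rw [lintegral_congr hsecond]
    rw [lintegral_add_left (hAGm.mul_const W1)]
    rw [lintegral_mul_const _ hAGm, hSA, hfirst, hT, mul_comm]
  -- Step E : conclusion
  have hfinal : ENNReal.ofReal (2 / ε) * (∫⁻ t : ℝ, ENNReal.ofReal (H t *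
      (if |t| ≤ 1 then |t| ^ (σ - 1 + ε / q) else |t| ^ (σ - 1 - ε / p))))
      ≤ ENNReal.ofReal (2 / ε) * ENNReal.ofReal c := by
    calc ENNReal.ofReal (2 / ε) * (∫⁻ t : ℝ, ENNReal.ofReal (H t *
        (if |t| ≤ 1 then |t| ^ (σ - 1 + ε / q) else |t| ^ (σ - 1 - ε / p))))
        = ∫⁻ x : ℝ, A.indicator G x * (W1 + V x) := hLHS
      _ ≤ ∫⁻ x : ℝ, A.indicator G x * W x := lintegral_mono hWlow
      _ = ∫⁻ y : ℝ, ∫⁻ x : ℝ, ENNReal.ofReal (H (x ^ δ * y) * f x * g y) := hrep.symm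
      _ ≤ ENNReal.ofReal c * ENNReal.ofReal (2 / ε) := le_of_lt hmain
      _ = ENNReal.ofReal (2 / ε) * ENNReal.ofReal c := mul_comm _ _
  exact (ENNReal.mul_le_mul_iff_right hX0 hXt).mp hfinal

private lemma my_rpow_tendsto {r : ℝ} (hr : 0 < r) {u : ℕ → ℝ} {l : ℝ}
    (hu : Filter.Tendsto u Filter.atTop (nhds l)) :
    Filter.Tendsto (fun n => r ^ (u n)) Filter.atTop (nhds (r ^ l)) := by
  have heq : (fun n => r ^ (u n)) = fun n => Real.exp (Real.log r * u n) :=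
    funext fun n => Real.rpow_def_of_pos hr _
  rw [heq, Real.rpow_def_of_pos hr]
  exact (Real.continuous_exp.tendsto _).comp (hu.const_mul _)

/-- Best possibility of the constant `K(σ)` in the whole-plane Yang–Hilbert-type
inequality: any valid `c > 0` satisfies `c ≥ K(σ)`. -/
theorem stmt18 (p q σ : ℝ) (hp : 1 < p) (hpq : 1 / p + 1 / q = 1)
    (δ : ℤ) (hδ : δ = -1 ∨ δ = 1)
    (H : ℝ → ℝ) (hH : Measurable H) (hH0 : ∀ t : ℝ, 0 ≤ H t)
    (hK0 : 0 < ∫⁻ t : ℝ, ENNReal.ofReal (H t * |t| ^ (σ - 1)))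
    (hK1 : (∫⁻ t : ℝ, ENNReal.ofReal (H t * |t| ^ (σ - 1))) < ⊤)
    (c : ℝ) (hc : 0 < c)
    (hbd : ∀ f g : ℝ → ℝ, Measurable f → Measurable g →
      (∀ x : ℝ, 0 ≤ f x) → (∀ y : ℝ, 0 ≤ g y) →
      0 < (∫⁻ x : ℝ, ENNReal.ofReal (|x| ^ (p * (1 - (δ : ℝ) * σ) - 1) * f x ^ p)) →
      (∫⁻ x : ℝ, ENNReal.ofReal (|x| ^ (p * (1 - (δ : ℝ) * σ) - 1) * f x ^ p)) < ⊤ →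
      0 < (∫⁻ y : ℝ, ENNReal.ofReal (|y| ^ (q * (1 - σ) - 1) * g y ^ q)) →
      (∫⁻ y : ℝ, ENNReal.ofReal (|y| ^ (q * (1 - σ) - 1) * g y ^ q)) < ⊤ →
      (∫⁻ y : ℝ, ∫⁻ x : ℝ, ENNReal.ofReal (H (x ^ δ * y) * f x * g y))
        < ENNReal.ofReal c *
            (∫⁻ x : ℝ, ENNReal.ofReal (|x| ^ (p * (1 - (δ : ℝ) * σ) - 1) * f x ^ p)) ^ (1 / p) *
            (∫⁻ y : ℝ, ENNReal.ofReal (|y| ^ (q * (1 - σ) - 1) * g y ^ q)) ^ (1 / q)) :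
    (∫⁻ t : ℝ, ENNReal.ofReal (H t * |t| ^ (σ - 1))) ≤ ENNReal.ofReal c := by
  have hp0 : 0 < p := lt_trans one_pos hp
  have hq0 : 0 < q := by
    have h1 : 1 / p < 1 := by rw [div_lt_one hp0]; exact hp
    have h2 : 0 < 1 / q := by linarith
    exact one_div_pos.mp h2
  set F : ℕ → ℝ → ℝ≥0∞ := fun n t => ENNReal.ofReal (H t *
    (if |t| ≤ 1 then |t| ^ (σ - 1 + ((n:ℝ) + 1)⁻¹ / q)
      else |t| ^ (σ - 1 - ((n:ℝ) + 1)⁻¹ / p))) with hF_def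
  have hFm : ∀ n, Measurable (F n) := by
    intro n
    apply Measurable.ennreal_ofReal
    exact hH.mul (Measurable.ite (my_meas_absIcc 1) (measurable_id.norm.pow_const _)
      (measurable_id.norm.pow_const _))
  have hkey : ∀ n : ℕ, (∫⁻ t : ℝ, F n t) ≤ ENNReal.ofReal c := by
    intro n
    exact my_claim p q σ hp hpq δ hδ H hH hH0 c hbd (by positivity)
  have hmono : ∀ t : ℝ, t ≠ 0 → Monotone fun n : ℕ => F n t := by
    intro t ht m n hmn
    have ht0 : 0 < |t| := abs_pos.mpr ht
    have hεle : ((n:ℝ) + 1)⁻¹ ≤ ((m:ℝ) + 1)⁻¹ := by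
      apply inv_anti₀ (by positivity)
      exact_mod_cast add_le_add_left (Nat.cast_le.mpr hmn) 1
    apply ENNReal.ofReal_le_ofReal
    apply mul_le_mul_of_nonneg_left _ (hH0 t)
    by_cases htle : |t| ≤ 1
    · simp only [if_pos htle]
      apply Real.rpow_le_rpow_of_exponent_ge ht0 htle
      have := (div_le_div_iff_of_pos_right hq0).mpr hεle
      linarith
    · simp only [if_neg htle]
      apply Real.rpow_le_rpow_of_exponent_le (le_of_not_ge htle)
      have := (div_le_div_iff_of_pos_right hp0).mpr hεle
      linarith
  have hsup : ∀ t : ℝ, t ≠ 0 → (⨆ n : ℕ, F n t) = ENNReal.ofReal (H t * |t| ^ (σ - 1)) := by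
    intro t ht
    have ht0 : 0 < |t| := abs_pos.mpr ht
    have hεtend : Filter.Tendsto (fun n : ℕ => ((n:ℝ) + 1)⁻¹) Filter.atTop (nhds 0) := by
      have := tendsto_one_div_add_atTop_nhds_zero_nat (𝕜 := ℝ)
      simpa [one_div] using this
    have hψtend : Filter.Tendsto (fun n : ℕ =>
        (if |t| ≤ 1 then |t| ^ (σ - 1 + ((n:ℝ) + 1)⁻¹ / q)
          else |t| ^ (σ - 1 - ((n:ℝ) + 1)⁻¹ / p))) Filter.atTop (nhds (|t| ^ (σ - 1))) := by
      by_cases htle : |t| ≤ 1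
      · simp only [if_pos htle]
        have hexp : Filter.Tendsto (fun n : ℕ => σ - 1 + ((n:ℝ) + 1)⁻¹ / q)
            Filter.atTop (nhds (σ - 1)) := by
          have h2 := (hεtend.div_const q).const_add (σ - 1)
          simpa using h2
        exact my_rpow_tendsto ht0 hexp
      · simp only [if_neg htle]
        have hexp : Filter.Tendsto (fun n : ℕ => σ - 1 - ((n:ℝ) + 1)⁻¹ / p)
            Filter.atTop (nhds (σ - 1)) := by
          have h2 := (hεtend.div_const p).const_sub (σ - 1)
          simpa using h2
        exact my_rpow_tendsto ht0 hexp
    have hFt : Filter.Tendsto (fun n : ℕ => F n t) Filter.atTop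
        (nhds (ENNReal.ofReal (H t * |t| ^ (σ - 1)))) := by
      apply (ENNReal.continuous_ofReal.tendsto _).comp
      exact hψtend.const_mul (H t)
    exact tendsto_nhds_unique (tendsto_atTop_iSup (hmono t ht)) hFt
  calc (∫⁻ t : ℝ, ENNReal.ofReal (H t * |t| ^ (σ - 1)))
      = ∫⁻ t : ℝ, ⨆ n : ℕ, F n t := by
        apply lintegral_congr_ae
        filter_upwards [my_ae_ne0] with t ht
        exact (hsup t ht).symm
    _ = ⨆ n : ℕ, ∫⁻ t : ℝ, F n t := by
        apply lintegral_iSup' (fun n => (hFm n).aemeasurable)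
        filter_upwards [my_ae_ne0] with t ht
        exact hmono t ht
    _ ≤ ENNReal.ofReal c := iSup_le hkey
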